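/- Let r = m < n (or r = n < m) and let b ∈ M_{m×n}(K) be the normal-form matrix with I_r in the upper-left corner and zeros elsewhere. Then the center of the Lie algebra (M_{n×m}(K), ⟦x,y⟧ = xby − ybx) is zero. -/
import Mathlib


/-- If `r = m < n` (or `r = n < m`) and `b` is the rank-`r` normal form,
then the center of `(M_{n×m}(K), ⟦x,y⟧ = xby − ybx)` is zero. -/
theorem center_eq_zero_normal_form {K : Type*} [Field K] [CharZero K] {m n r : ℕ}
    (hcase : (r = m ∧ m < n) ∨ (r = n ∧ n < m))
    (b : Matrix (Fin m) (Fin n) K)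
    (hb : ∀ i j, b i j = if ((i : ℕ) = (j : ℕ) ∧ (i : ℕ) < r) then 1 else 0) :
    ∀ w : Matrix (Fin n) (Fin m) K,
      (∀ x : Matrix (Fin n) (Fin m) K, x * b * w - w * b * x = 0) → w = 0 := by
  intro w hw
  -- key scalar identity from plugging in standard basis matrices
  have key : ∀ (p i : Fin n) (q j : Fin m),
      (if p = i then (b * w) q j else 0) = (if q = j then (w * b) i p else 0) := by
    intro p i q j
    have h := sub_eq_zero.mp (hw (Matrix.single p q 1))
    rw [Matrix.mul_assoc] at h
    have h2 := congrFun (congrFun h i) j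
    simpa [Matrix.mul_apply, Matrix.single, ite_mul, mul_ite, ite_and,
      Finset.sum_ite_eq, Finset.sum_ite_eq'] using h2
  ext i k
  rcases hcase with ⟨hr, hmn⟩ | ⟨hr, hnm⟩
  · -- case r = m < n
    set k' : Fin n := ⟨(k : ℕ), k.isLt.trans hmn⟩ with hk'
    have hA : (w * b) i k' = w i k := by
      rw [Matrix.mul_apply]
      rw [Finset.sum_eq_single k]
      · rw [hb]
        have : ((k : ℕ) = (k' : ℕ) ∧ (k : ℕ) < r) := ⟨rfl, by omega⟩
        rw [if_pos this, mul_one]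
      · intro t _ ht
        rw [hb]
        have : ¬((t : ℕ) = (k' : ℕ) ∧ (t : ℕ) < r) := by
          rintro ⟨h3, _⟩
          exact ht (Fin.ext (by simpa [hk'] using h3))
        simp [this]
      · intro h; exact absurd (Finset.mem_univ k) h
    have hB : (w * b) i k' = 0 := by
      by_cases hik : k' = i
      · -- diagonal entry
        set p0 : Fin n := ⟨m, hmn⟩ with hp0
        have h1 := key k' i k k
        have h2 := key p0 p0 k k
        rw [if_pos hik, if_pos rfl] at h1
        rw [if_pos rfl, if_pos rfl] at h2
        have hz : (w * b) p0 p0 = 0 := by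
          rw [Matrix.mul_apply]
          apply Finset.sum_eq_zero
          intro t _
          rw [hb]
          have : ¬((t : ℕ) = (p0 : ℕ) ∧ (t : ℕ) < r) := by
            rintro ⟨h3, h4⟩
            simp only [hp0] at h3
            omega
          simp [this]
        rw [← h1, h2, hz]
      · have h1 := key k' i k k
        rw [if_neg hik, if_pos rfl] at h1
        exact h1.symm
    rw [hA] at hB
    simpa using hB
  · -- case r = n < m
    set i' : Fin m := ⟨(i : ℕ), i.isLt.trans hnm⟩ with hi'
    have hA : (b * w) i' k = w i k := by
      rw [Matrix.mul_apply]
      rw [Finset.sum_eq_single i]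
      · rw [hb]
        have : ((i' : ℕ) = (i : ℕ) ∧ (i' : ℕ) < r) := ⟨rfl, by simp [hi']; omega⟩
        rw [if_pos this, one_mul]
      · intro t _ ht
        rw [hb]
        have : ¬((i' : ℕ) = (t : ℕ) ∧ (i' : ℕ) < r) := by
          rintro ⟨h3, _⟩
          exact ht (Fin.ext (by simpa [hi'] using h3.symm))
        simp [this]
      · intro h; exact absurd (Finset.mem_univ i) h
    have hB : (b * w) i' k = 0 := by
      by_cases hik : i' = k
      · set q0 : Fin m := ⟨n, hnm⟩ with hq0
        have h1 := key i i i' k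
        have h2 := key i i q0 q0
        rw [if_pos rfl, if_pos hik] at h1
        rw [if_pos rfl, if_pos rfl] at h2
        have hz : (b * w) q0 q0 = 0 := by
          rw [Matrix.mul_apply]
          apply Finset.sum_eq_zero
          intro t _
          rw [hb]
          have : ¬((q0 : ℕ) = (t : ℕ) ∧ (q0 : ℕ) < r) := by
            rintro ⟨h3, h4⟩
            simp only [hq0] at h4
            omega
          simp [this]
        rw [h1, ← h2, hz]
      · have h1 := key i i i' k
        rw [if_pos rfl, if_neg hik] at h1
        exact h1
    rw [hA] at hB
    simpa using hB
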